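/- Let f : 𝒳 → ℝ be measurable, α ∈ (0,1], c > 0, and define g(x) = log E_x exp( 2c^{−1} |Z_0(f)|^α ). Assume there exist a measurable function V : 𝒳 → [0,∞), a set C ∈ ℬ and constants b ≥ 0, K > 0 such that V(x) ≤ K for all x ∈ C and, for every x ∈ 𝒳, ∫ exp(V(y)) P^m(x, dy) ≤ exp( V(x) − g(x) + b·1_C(x) ), where P^m is the m-step transition kernel. Then: (i) for every x ∈ 𝒳, E_x exp( Σ_{k=0}^{τ_C−1} g(X_{km}) ) ≤ exp( b·1_C(x) + V(x) ); and (ii) sup_{x∈C} ‖ Σ_{k=0}^{τ_C−1} |Z_k(f)|^α ‖_{ψ_1, P_x} ≤ max{ 1, (b+K)/log 2 } · c. -/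

import Mathlib

open MeasureTheory ProbabilityTheory Real
open scoped ENNReal

/-- Prepend a point to a trajectory. -/
def prependPath {𝒳 : Type*} (x : 𝒳) (ω : ℕ → 𝒳) : ℕ → 𝒳 :=
  fun n => Nat.casesOn n x fun k => ω k

/-- `Z_k(f) = Σ_{j=0}^{m−1} f(X_{km+j})` evaluated on a trajectory. -/
noncomputable def pathZ {𝒳 : Type*} (m : ℕ) (f : 𝒳 → ℝ) (k : ℕ) (ω : ℕ → 𝒳) : ℝ :=
  ∑ j ∈ Finset.range m, f (ω (k * m + j))

/-- The first return time `τ_C = inf{k ≥ 1 : X_{km} ∈ C}` of the `m`-skeleton to `C`,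
with values in `[0,∞]` (`inf ∅ = ∞`). -/
noncomputable def pathTau {𝒳 : Type*} (m : ℕ) (C : Set 𝒳) (ω : ℕ → 𝒳) : ℝ≥0∞ :=
  sInf {c : ℝ≥0∞ | ∃ j : ℕ, c = j ∧ 1 ≤ j ∧ ω (j * m) ∈ C}

/-- `Σ_{k=0}^{τ−1} u_k`, interpreted in `[0,∞]`. -/
noncomputable def sumBefore (τ : ℝ≥0∞) (u : ℕ → ℝ≥0∞) : ℝ≥0∞ :=
  ∑' k : ℕ, if (k : ℝ≥0∞) < τ then u k else 0

/-- The exponential function on `[0,∞]`, with `exp ∞ = ∞`. -/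
noncomputable def expE (y : ℝ≥0∞) : ℝ≥0∞ :=
  if y = ⊤ then ⊤ else ENNReal.ofReal (Real.exp y.toReal)

/-- The exponential Orlicz norm `‖Y‖_{ψ_α,Q}` of a `[0,∞]`-valued variable
(with `inf ∅ = ∞`). -/
noncomputable def psiNormE {Ω : Type*} [MeasurableSpace Ω] (Q : Measure Ω) (α : ℝ)
    (Y : Ω → ℝ≥0∞) : ℝ≥0∞ :=
  sInf {c : ℝ≥0∞ | ∃ r : ℝ, 0 < r ∧ c = ENNReal.ofReal r ∧
    ∫⁻ ω, expE (Y ω ^ α / ENNReal.ofReal (r ^ α)) ∂Q ≤ 2}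

namespace Stmt15
open scoped Classical
variable {𝒳 : Type*} [MeasurableSpace 𝒳]

/-- shift a path by m -/
def shiftPath (m : ℕ) (ω : ℕ → 𝒳) : ℕ → 𝒳 := fun n => ω (n + m)

/-- splice: first m coordinates from ω, the rest from η -/
def splicePath (m : ℕ) (ω η : ℕ → 𝒳) : ℕ → 𝒳 := fun n => if n < m then ω n else η (n - m)

lemma measurable_prependPath (x : 𝒳) : Measurable (prependPath x) := by
  apply measurable_pi_lambda
  intro n
  cases n with
  | zero => exact measurable_const
  | succ k => exact measurable_pi_apply k

lemma measurable_shiftPath (m : ℕ) : Measurable (shiftPath (𝒳 := 𝒳) m) :=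
  measurable_pi_lambda _ fun n => measurable_pi_apply (n + m)

lemma measurable_splicePath (m : ℕ) :
    Measurable (fun p : (ℕ → 𝒳) × (ℕ → 𝒳) => splicePath m p.1 p.2) := by
  apply measurable_pi_lambda
  intro n
  by_cases h : n < m
  · simp only [splicePath, h, if_true]
    exact (measurable_pi_apply n).comp measurable_fst
  · simp only [splicePath, h, if_false]
    exact (measurable_pi_apply (n - m)).comp measurable_snd

section PaLemmas

variable (κ : Kernel 𝒳 𝒳) (Pa : 𝒳 → Measure (ℕ → 𝒳)) [∀ x, IsProbabilityMeasure (Pa x)]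

lemma measurable_inner (hPa_meas : Measurable Pa)
    {F : (ℕ → 𝒳) → (ℕ → 𝒳) → ℝ≥0∞} (hF : Measurable (Function.uncurry F))
    {G : (ℕ → 𝒳) → 𝒳} (hG : Measurable G) :
    Measurable fun ω => ∫⁻ η, F ω η ∂(Pa (G ω)) := by
  let PaK : Kernel 𝒳 (ℕ → 𝒳) := ⟨Pa, hPa_meas⟩
  haveI : IsMarkovKernel PaK := ⟨fun x => (inferInstance : IsProbabilityMeasure (Pa x))⟩
  let κ' : Kernel (ℕ → 𝒳) (ℕ → 𝒳) := PaK.comap G hG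
  haveI : IsMarkovKernel κ' := by
    constructor
    intro a
    rw [Kernel.comap_apply]
    exact (inferInstance : IsProbabilityMeasure (Pa (G a)))
  have := Measurable.lintegral_kernel_prod_right (κ := κ') (f := F) hF
  simpa [κ', Kernel.comap_apply, PaK] using this

variable (hPa_meas : Measurable Pa)
    (hPa : ∀ x, Pa x = (κ x).bind fun y => (Pa y).map (prependPath x))

include hPa_meas hPa in
/-- substitute the starting point for coordinate 0 -/
lemma subst0 (x : 𝒳) {H : 𝒳 → (ℕ → 𝒳) → ℝ≥0∞} (hH : Measurable (Function.uncurry H)) :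
    ∫⁻ ω, H (ω 0) ω ∂(Pa x) = ∫⁻ ω, H x ω ∂(Pa x) := by
  have hmeasμ : Measurable fun y => (Pa y).map (prependPath x) :=
    (Measure.measurable_map _ (measurable_prependPath x)).comp hPa_meas
  have h1 : Measurable fun ω : ℕ → 𝒳 => H (ω 0) ω := by
    have hg : Measurable fun ω : ℕ → 𝒳 => (ω 0, ω) :=
      (measurable_pi_apply 0).prodMk measurable_id
    exact hH.comp hg
  have h2 : Measurable (H x) := by
    have hg : Measurable fun ω : ℕ → 𝒳 => (x, ω) :=
      measurable_const.prodMk measurable_id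
    exact hH.comp hg
  rw [hPa x, Measure.lintegral_bind hmeasμ.aemeasurable h1.aemeasurable, Measure.lintegral_bind hmeasμ.aemeasurable h2.aemeasurable]
  refine lintegral_congr fun y => ?_
  rw [lintegral_map h1 (measurable_prependPath x), lintegral_map h2 (measurable_prependPath x)]
  rfl

include hPa_meas hPa in
/-- Markov property at time m (spliced form). -/
lemma star : ∀ (m : ℕ) (x : 𝒳) (F : (ℕ → 𝒳) → (ℕ → 𝒳) → ℝ≥0∞),
    Measurable (Function.uncurry F) →
    ∫⁻ ω, F ω (shiftPath m ω) ∂(Pa x)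
      = ∫⁻ ω, ∫⁻ η, F (splicePath m ω η) η ∂(Pa (ω m)) ∂(Pa x) := by
  intro m
  induction m with
  | zero =>
    intro x F hF
    have hsplice : ∀ ω η : ℕ → 𝒳, splicePath 0 ω η = η := by
      intro ω η; funext n; simp [splicePath]
    have hdiag : Measurable fun η : ℕ → 𝒳 => F η η := by
      have hg : Measurable fun η : ℕ → 𝒳 => (η, η) := measurable_id.prodMk measurable_id
      exact hF.comp hg
    have hshift : ∀ ω : ℕ → 𝒳, shiftPath 0 ω = ω := fun ω => rfl
    calc ∫⁻ ω, F ω (shiftPath 0 ω) ∂(Pa x) = ∫⁻ ω, F ω ω ∂(Pa x) := by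
            exact lintegral_congr fun ω => by rw [hshift]
      _ = ∫⁻ ω, (fun (y : 𝒳) (_ : ℕ → 𝒳) => ∫⁻ η, F η η ∂(Pa y)) x ω ∂(Pa x) := by
            rw [lintegral_const]
            simp
      _ = ∫⁻ ω, (fun (y : 𝒳) (_ : ℕ → 𝒳) => ∫⁻ η, F η η ∂(Pa y)) (ω 0) ω ∂(Pa x) := by
            refine (subst0 κ Pa hPa_meas hPa x (H := fun (y : 𝒳) (_ : ℕ → 𝒳) => ∫⁻ η, F η η ∂(Pa y)) ?_).symm
            have : Measurable fun p : 𝒳 × (ℕ → 𝒳) => ∫⁻ η, F η η ∂(Pa p.1) :=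
              (Measure.measurable_lintegral hdiag).comp (hPa_meas.comp measurable_fst)
            exact this
      _ = ∫⁻ ω, ∫⁻ η, F (splicePath 0 ω η) η ∂(Pa (ω 0)) ∂(Pa x) := by
            refine lintegral_congr fun ω => lintegral_congr fun η => by rw [hsplice]
  | succ m ih =>
    intro x F hF
    have hpre : ∀ z : 𝒳, Measurable (prependPath (𝒳 := 𝒳) z) := measurable_prependPath
    have hmeasμ : Measurable fun y => (Pa y).map (prependPath x) :=
      (Measure.measurable_map _ (hpre x)).comp hPa_meas
    have hL : Measurable fun ω : ℕ → 𝒳 => F ω (shiftPath (m + 1) ω) := by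
      have hg : Measurable fun ω : ℕ → 𝒳 => (ω, shiftPath (m + 1) ω) :=
        measurable_id.prodMk (measurable_shiftPath (m + 1))
      exact hF.comp hg
    have hFsplice : Measurable (Function.uncurry fun (ω η : ℕ → 𝒳) => F (splicePath (m + 1) ω η) η) := by
      have hg : Measurable fun p : (ℕ → 𝒳) × (ℕ → 𝒳) => (splicePath (m + 1) p.1 p.2, p.2) :=
        (measurable_splicePath (m + 1)).prodMk measurable_snd
      exact hF.comp hg
    have hΦ : Measurable fun w : ℕ → 𝒳 => ∫⁻ η, F (splicePath (m + 1) w η) η ∂(Pa (w (m + 1))) :=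
      measurable_inner Pa hPa_meas hFsplice (measurable_pi_apply (m + 1))
    have hkey : ∀ y : 𝒳, ∫⁻ ω', F (prependPath x ω') (shiftPath (m + 1) (prependPath x ω')) ∂(Pa y)
        = ∫⁻ ω', (fun w => ∫⁻ η, F (splicePath (m + 1) w η) η ∂(Pa (w (m + 1)))) (prependPath x ω') ∂(Pa y) := by
      intro y
      have hshift : ∀ ω' : ℕ → 𝒳, shiftPath (m + 1) (prependPath x ω') = shiftPath m ω' := by
        intro ω'; funext n; rfl
      have hps : ∀ ω η : ℕ → 𝒳, prependPath x (splicePath m ω η) = splicePath (m + 1) (prependPath x ω) η := by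
        intro ω η; funext n
        cases n with
        | zero => simp [prependPath, splicePath]
        | succ k =>
          simp only [prependPath, splicePath, Nat.succ_sub_succ]
          by_cases h : k < m
          · simp [h, Nat.succ_lt_succ h]
          · have : ¬ k + 1 < m + 1 := by omega
            simp [h, this]
      have hG : Measurable (Function.uncurry fun (ω η : ℕ → 𝒳) => F (prependPath x ω) η) := by
        have hg : Measurable fun p : (ℕ → 𝒳) × (ℕ → 𝒳) => (prependPath x p.1, p.2) :=
          ((hpre x).comp measurable_fst).prodMk measurable_snd
        exact hF.comp hg
      calc ∫⁻ ω', F (prependPath x ω') (shiftPath (m + 1) (prependPath x ω')) ∂(Pa y)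
          = ∫⁻ ω', F (prependPath x ω') (shiftPath m ω') ∂(Pa y) := by
            exact lintegral_congr fun ω' => by rw [hshift]
        _ = ∫⁻ ω, ∫⁻ η, F (prependPath x (splicePath m ω η)) η ∂(Pa (ω m)) ∂(Pa y) :=
            ih y (fun ω η => F (prependPath x ω) η) hG
        _ = ∫⁻ ω', (fun w => ∫⁻ η, F (splicePath (m + 1) w η) η ∂(Pa (w (m + 1)))) (prependPath x ω') ∂(Pa y) := by
            refine lintegral_congr fun ω => ?_
            have h1 : ∫⁻ η, F (prependPath x (splicePath m ω η)) η ∂(Pa (ω m))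
                = ∫⁻ η, F (splicePath (m + 1) (prependPath x ω) η) η ∂(Pa (ω m)) :=
              lintegral_congr fun η => by rw [hps]
            rw [h1]
            rfl
    rw [hPa x, Measure.lintegral_bind hmeasμ.aemeasurable hL.aemeasurable, Measure.lintegral_bind hmeasμ.aemeasurable hΦ.aemeasurable]
    refine lintegral_congr fun y => ?_
    rw [lintegral_map hL (hpre x), lintegral_map hΦ (hpre x)]
    exact hkey y

end PaLemmas

section Tau
variable (m : ℕ) (C : Set 𝒳)

lemma pathTau_lt_iff (ω : ℕ → 𝒳) (k : ℕ) :
    (k : ℝ≥0∞) < pathTau m C ω ↔ ∀ j : ℕ, 1 ≤ j → j ≤ k → ω (j * m) ∉ C := by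
  constructor
  · intro h j h1 hk hmem
    have hle : pathTau m C ω ≤ (j : ℝ≥0∞) := sInf_le ⟨j, rfl, h1, hmem⟩
    have : (k : ℝ≥0∞) < (j : ℝ≥0∞) := lt_of_lt_of_le h hle
    exact absurd (Nat.cast_lt.1 this) (by omega)
  · intro h
    have hk1 : ((k + 1 : ℕ) : ℝ≥0∞) ≤ pathTau m C ω := by
      refine le_sInf fun e he => ?_
      obtain ⟨j, rfl, h1, hmem⟩ := he
      have : ¬ j ≤ k := fun hle => h j h1 hle hmem
      exact Nat.cast_le.2 (by omega)
    exact lt_of_lt_of_le (Nat.cast_lt.2 (by omega)) hk1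

lemma pathTau_pos (ω : ℕ → 𝒳) : (0 : ℝ≥0∞) < pathTau m C ω := by
  have := (pathTau_lt_iff m C ω 0).2 (fun j h1 h0 => by omega)
  simpa using this

lemma pathTau_lt_iff_of_mem {ω : ℕ → 𝒳} (hmem : ω m ∈ C) (k : ℕ) :
    (k : ℝ≥0∞) < pathTau m C ω ↔ k = 0 := by
  constructor
  · intro h
    have hle : pathTau m C ω ≤ ((1 : ℕ) : ℝ≥0∞) :=
      sInf_le ⟨1, rfl, le_refl 1, by simpa [one_mul] using hmem⟩
    have : (k : ℝ≥0∞) < ((1 : ℕ) : ℝ≥0∞) := lt_of_lt_of_le h hle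
    have := Nat.cast_lt.1 this
    omega
  · rintro rfl
    simpa using pathTau_pos m C ω

lemma pathTau_lt_shift {ω : ℕ → 𝒳} (hnot : ω m ∉ C) (k : ℕ) :
    ((k + 1 : ℕ) : ℝ≥0∞) < pathTau m C ω ↔ (k : ℝ≥0∞) < pathTau m C (shiftPath m ω) := by
  rw [pathTau_lt_iff, pathTau_lt_iff]
  constructor
  · intro h j h1 hk
    have := h (j + 1) (by omega) (by omega)
    have harith : (j + 1) * m = j * m + m := by ring
    simpa [shiftPath, harith] using this
  · intro h j h1 hk
    match j, h1 with
    | 1, _ => simpa [one_mul] using hnot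
    | (i + 2), _ =>
      have := h (i + 1) (by omega) (by omega)
      have harith : (i + 2) * m = (i + 1) * m + m := by ring
      simpa [shiftPath, harith] using this

lemma measurableSet_tauGT (hC : MeasurableSet C) (k : ℕ) :
    MeasurableSet {ω : ℕ → 𝒳 | (k : ℝ≥0∞) < pathTau m C ω} := by
  have hset : {ω : ℕ → 𝒳 | (k : ℝ≥0∞) < pathTau m C ω}
      = ⋂ (j : ℕ) (_ : 1 ≤ j) (_ : j ≤ k), (fun ω : ℕ → 𝒳 => ω (j * m)) ⁻¹' Cᶜ := by
    ext ω
    simp [pathTau_lt_iff, Set.mem_iInter]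
  rw [hset]
  exact MeasurableSet.iInter fun j => MeasurableSet.iInter fun _ =>
    MeasurableSet.iInter fun _ => (measurable_pi_apply (j * m)) hC.compl

end Tau

section Blk
variable (m : ℕ) (C : Set 𝒳)

/-- generic truncated excursion product -/
noncomputable def blk (φ : ℕ → (ℕ → 𝒳) → ℝ) (n : ℕ) (ω : ℕ → 𝒳) : ℝ≥0∞ :=
  ∏ k ∈ Finset.range n,
    if (k : ℝ≥0∞) < pathTau m C ω then ENNReal.ofReal (Real.exp (φ k ω)) else 1

lemma blk_zero (φ : ℕ → (ℕ → 𝒳) → ℝ) (ω : ℕ → 𝒳) : blk m C φ 0 ω = 1 := by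
  simp [blk]

lemma blk_succ (φ : ℕ → (ℕ → 𝒳) → ℝ)
    (hφ : ∀ k ω, φ (k + 1) ω = φ k (shiftPath m ω)) (n : ℕ) (ω : ℕ → 𝒳) :
    blk m C φ (n + 1) ω = ENNReal.ofReal (Real.exp (φ 0 ω)) *
      (if ω m ∈ C then 1 else blk m C φ n (shiftPath m ω)) := by
  rw [blk, Finset.prod_range_succ']
  have h0 : (if ((0 : ℕ) : ℝ≥0∞) < pathTau m C ω then ENNReal.ofReal (Real.exp (φ 0 ω)) else 1)
      = ENNReal.ofReal (Real.exp (φ 0 ω)) := by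
    rw [if_pos]
    simpa using pathTau_pos m C ω
  by_cases hmem : ω m ∈ C
  · have hfac : ∀ k : ℕ, (if ((k + 1 : ℕ) : ℝ≥0∞) < pathTau m C ω
        then ENNReal.ofReal (Real.exp (φ (k + 1) ω)) else 1) = 1 := by
      intro k
      refine if_neg fun h => ?_
      have := (pathTau_lt_iff_of_mem m C hmem (k + 1)).1 h
      omega
    rw [if_pos hmem]
    calc (∏ k ∈ Finset.range n, if ((k + 1 : ℕ) : ℝ≥0∞) < pathTau m C ω
            then ENNReal.ofReal (Real.exp (φ (k + 1) ω)) else 1) *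
          (if ((0 : ℕ) : ℝ≥0∞) < pathTau m C ω then ENNReal.ofReal (Real.exp (φ 0 ω)) else 1)
        = (∏ _k ∈ Finset.range n, 1) * ENNReal.ofReal (Real.exp (φ 0 ω)) := by
          rw [h0, Finset.prod_congr rfl fun k _ => hfac k]
      _ = ENNReal.ofReal (Real.exp (φ 0 ω)) * 1 := by simp
  · have hfac : ∀ k : ℕ, (if ((k + 1 : ℕ) : ℝ≥0∞) < pathTau m C ω
        then ENNReal.ofReal (Real.exp (φ (k + 1) ω)) else 1)
        = (if ((k : ℕ) : ℝ≥0∞) < pathTau m C (shiftPath m ω)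
        then ENNReal.ofReal (Real.exp (φ k (shiftPath m ω))) else 1) := by
      intro k
      exact if_congr (pathTau_lt_shift m C hmem k) (by rw [hφ]) rfl
    rw [if_neg hmem, h0, Finset.prod_congr rfl fun k _ => hfac k]
    rw [mul_comm]
    rfl

lemma blk_measurable (hC : MeasurableSet C) (φ : ℕ → (ℕ → 𝒳) → ℝ)
    (hφ : ∀ k, Measurable (φ k)) (n : ℕ) : Measurable (blk m C φ n) := by
  apply Finset.measurable_prod
  intro k _
  exact Measurable.ite (measurableSet_tauGT m C hC k)
    (ENNReal.measurable_ofReal.comp (Real.measurable_exp.comp (hφ k))) measurable_const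

end Blk

section Claims
variable (κ : Kernel 𝒳 𝒳) (Pa : 𝒳 → Measure (ℕ → 𝒳)) [∀ x, IsProbabilityMeasure (Pa x)]
variable (m : ℕ) (C : Set 𝒳) (f : 𝒳 → ℝ) (g : 𝒳 → ℝ) (c α : ℝ)

lemma measurable_pathZ (hf : Measurable f) (k : ℕ) :
    Measurable fun ω : ℕ → 𝒳 => pathZ m f k ω :=
  Finset.measurable_sum _ fun j _ => hf.comp (measurable_pi_apply (k * m + j))

lemma pathZ_shift (k : ℕ) (ω : ℕ → 𝒳) : pathZ m f (k + 1) ω = pathZ m f k (shiftPath m ω) := by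
  unfold pathZ shiftPath
  refine Finset.sum_congr rfl fun j _ => ?_
  have h : (k + 1) * m + j = k * m + j + m := by ring
  rw [h]

lemma claim2 (hPa_meas : Measurable Pa)
    (hPa : ∀ x, Pa x = (κ x).bind fun y => (Pa y).map (prependPath x))
    (hC : MeasurableSet C) (hf : Measurable f) (hgm : Measurable g)
    (hg : ∀ x, ∫⁻ ω, ENNReal.ofReal (Real.exp (2 / c * |pathZ m f 0 ω| ^ α)) ∂(Pa x)
        = ENNReal.ofReal (Real.exp (g x))) :
    ∀ (n : ℕ) (x : 𝒳),
      ∫⁻ ω, blk m C (fun k ω => 2 / c * |pathZ m f k ω| ^ α - g (ω (k * m))) n ω ∂(Pa x) ≤ 1 := by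
  set φ : ℕ → (ℕ → 𝒳) → ℝ := fun k ω => 2 / c * |pathZ m f k ω| ^ α - g (ω (k * m)) with hφdef
  have hφshift : ∀ (k : ℕ) (ω : ℕ → 𝒳), φ (k + 1) ω = φ k (shiftPath m ω) := by
    intro k ω
    have h1 : (k + 1) * m = k * m + m := by ring
    simp only [hφdef, pathZ_shift m f, shiftPath, h1]
  have hφ0 : ∀ ω : ℕ → 𝒳, φ 0 ω = 2 / c * |pathZ m f 0 ω| ^ α - g (ω 0) := by
    intro ω; simp only [hφdef, Nat.zero_mul]
  have hφm : ∀ k, Measurable (φ k) := fun k =>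
    (((measurable_pathZ m f hf k).abs.pow measurable_const).const_mul (2 / c)).sub
      (hgm.comp (measurable_pi_apply (k * m)))
  have hb : ∀ n, Measurable (blk m C φ n) := blk_measurable m C hC φ hφm
  have hA0 : Measurable fun ω : ℕ → 𝒳 => 2 / c * |pathZ m f 0 ω| ^ α :=
    ((measurable_pathZ m f hf 0).abs.pow measurable_const).const_mul (2 / c)
  intro n
  induction n with
  | zero =>
    intro x
    simp [blk_zero]
  | succ n ih =>
    intro x
    have hTm : Measurable fun ω : ℕ → 𝒳 =>
        (if ω m ∈ C then 1 else blk m C φ n (shiftPath m ω) : ℝ≥0∞) :=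
      Measurable.ite ((measurable_pi_apply m) hC) measurable_const
        ((hb n).comp (measurable_shiftPath m))
    have hTfm : Measurable fun η : ℕ → 𝒳 => (if η 0 ∈ C then 1 else blk m C φ n η : ℝ≥0∞) :=
      Measurable.ite ((measurable_pi_apply 0) hC) measurable_const (hb n)
    have hsh0 : ∀ ω : ℕ → 𝒳, shiftPath m ω 0 = ω m := fun ω => by simp [shiftPath]
    have hsplZ : ∀ ω η : ℕ → 𝒳, pathZ m f 0 (splicePath m ω η) = pathZ m f 0 ω := by
      intro ω η
      unfold pathZ splicePath
      refine Finset.sum_congr rfl fun j hj => ?_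
      have hj' : j < m := Finset.mem_range.1 hj
      have h0 : 0 * m + j = j := by omega
      rw [h0]
      simp [hj']
    have hinner : ∀ y : 𝒳,
        (∫⁻ η, (if η 0 ∈ C then 1 else blk m C φ n η : ℝ≥0∞) ∂(Pa y)) ≤ 1 := by
      intro y
      have hHm : Measurable (Function.uncurry
          fun (z : 𝒳) (η : ℕ → 𝒳) => (if z ∈ C then 1 else blk m C φ n η : ℝ≥0∞)) := by
        refine Measurable.ite (measurable_fst hC) measurable_const ((hb n).comp measurable_snd)
      have hsub := subst0 κ Pa hPa_meas hPa y
        (H := fun (z : 𝒳) (η : ℕ → 𝒳) => (if z ∈ C then 1 else blk m C φ n η : ℝ≥0∞)) hHm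
      rw [hsub]
      by_cases hy : y ∈ C
      · simp [hy]
      · simp only [hy, if_false]
        exact ih y
    set F : (ℕ → 𝒳) → (ℕ → 𝒳) → ℝ≥0∞ := fun ω η =>
      ENNReal.ofReal (Real.exp (2 / c * |pathZ m f 0 ω| ^ α - g x)) *
        (if η 0 ∈ C then 1 else blk m C φ n η) with hFdef
    have hFm : Measurable (Function.uncurry F) := by
      refine Measurable.mul ?_ ?_
      · exact (Real.measurable_exp.comp
          ((hA0.comp measurable_fst).sub measurable_const)).ennreal_ofReal
      · exact Measurable.ite (((measurable_pi_apply 0).comp measurable_snd) hC)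
          measurable_const ((hb n).comp measurable_snd)
    have hexpA0 : Measurable fun ω : ℕ → 𝒳 =>
        ENNReal.ofReal (Real.exp (2 / c * |pathZ m f 0 ω| ^ α - g x)) :=
      (Real.measurable_exp.comp (hA0.sub measurable_const)).ennreal_ofReal
    calc ∫⁻ ω, blk m C φ (n + 1) ω ∂(Pa x)
        = ∫⁻ ω, ENNReal.ofReal (Real.exp (2 / c * |pathZ m f 0 ω| ^ α - g (ω 0))) *
            (if ω m ∈ C then 1 else blk m C φ n (shiftPath m ω)) ∂(Pa x) := by
          refine lintegral_congr fun ω => ?_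
          rw [blk_succ m C φ hφshift, hφ0]
      _ = ∫⁻ ω, ENNReal.ofReal (Real.exp (2 / c * |pathZ m f 0 ω| ^ α - g x)) *
            (if ω m ∈ C then 1 else blk m C φ n (shiftPath m ω)) ∂(Pa x) := by
          refine subst0 κ Pa hPa_meas hPa x
            (H := fun (y : 𝒳) (ω : ℕ → 𝒳) =>
              ENNReal.ofReal (Real.exp (2 / c * |pathZ m f 0 ω| ^ α - g y)) *
                (if ω m ∈ C then 1 else blk m C φ n (shiftPath m ω))) ?_
          refine Measurable.mul ?_ ?_
          · exact (Real.measurable_exp.comp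
              ((hA0.comp measurable_snd).sub (hgm.comp measurable_fst))).ennreal_ofReal
          · exact Measurable.ite (((measurable_pi_apply m).comp measurable_snd) hC)
              measurable_const (((hb n).comp (measurable_shiftPath m)).comp measurable_snd)
      _ = ∫⁻ ω, F ω (shiftPath m ω) ∂(Pa x) := by
          refine lintegral_congr fun ω => ?_
          rw [hFdef]
          simp only [hsh0]
      _ = ∫⁻ ω, ∫⁻ η, F (splicePath m ω η) η ∂(Pa (ω m)) ∂(Pa x) :=
          star κ Pa hPa_meas hPa m x F hFm
      _ ≤ ∫⁻ ω, ENNReal.ofReal (Real.exp (2 / c * |pathZ m f 0 ω| ^ α - g x)) * 1 ∂(Pa x) := by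
          refine lintegral_mono fun ω => ?_
          have hin : ∫⁻ η, F (splicePath m ω η) η ∂(Pa (ω m))
              = ENNReal.ofReal (Real.exp (2 / c * |pathZ m f 0 ω| ^ α - g x)) *
                ∫⁻ η, (if η 0 ∈ C then 1 else blk m C φ n η : ℝ≥0∞) ∂(Pa (ω m)) := by
            rw [← lintegral_const_mul _ hTfm]
            refine lintegral_congr fun η => ?_
            rw [hFdef]
            simp only [hsplZ]
          rw [hin]
          exact mul_le_mul_right (hinner (ω m)) _
      _ = ENNReal.ofReal (Real.exp (- g x)) *
            ∫⁻ ω, ENNReal.ofReal (Real.exp (2 / c * |pathZ m f 0 ω| ^ α)) ∂(Pa x) := by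
          have hm2 : Measurable fun ω : ℕ → 𝒳 =>
              ENNReal.ofReal (Real.exp (2 / c * |pathZ m f 0 ω| ^ α)) :=
            (Real.measurable_exp.comp hA0).ennreal_ofReal
          rw [← lintegral_const_mul _ hm2]
          refine lintegral_congr fun ω => ?_
          rw [mul_one, ← ENNReal.ofReal_mul (le_of_lt (Real.exp_pos _)), ← Real.exp_add]
          congr 2
          ring
      _ = ENNReal.ofReal (Real.exp (- g x)) * ENNReal.ofReal (Real.exp (g x)) := by rw [hg x]
      _ = 1 := by
          rw [← ENNReal.ofReal_mul (le_of_lt (Real.exp_pos _)), ← Real.exp_add]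
          simp

lemma claim1 (hPa_meas : Measurable Pa)
    (hPa : ∀ x, Pa x = (κ x).bind fun y => (Pa y).map (prependPath x))
    (hC : MeasurableSet C) (hgm : Measurable g)
    (V : 𝒳 → ℝ) (hVm : Measurable V) (hV0 : ∀ x, 0 ≤ V x) (b : ℝ) (hb : 0 ≤ b)
    (hdrift : ∀ x, ∫⁻ ω, ENNReal.ofReal (Real.exp (V (ω m))) ∂(Pa x)
        ≤ ENNReal.ofReal (Real.exp (V x - g x + b * Set.indicator C (fun _ => 1) x))) :
    ∀ (n : ℕ) (x : 𝒳),
      ∫⁻ ω, blk m C (fun k ω => g (ω (k * m))) n ω *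
          (if (n : ℝ≥0∞) < pathTau m C ω then ENNReal.ofReal (Real.exp (V (ω (n * m)))) else 1)
        ∂(Pa x)
      ≤ ENNReal.ofReal (Real.exp (b * Set.indicator C (fun _ => 1) x + V x)) := by
  set φ : ℕ → (ℕ → 𝒳) → ℝ := fun k ω => g (ω (k * m)) with hφdef
  have hφshift : ∀ (k : ℕ) (ω : ℕ → 𝒳), φ (k + 1) ω = φ k (shiftPath m ω) := by
    intro k ω
    have h1 : (k + 1) * m = k * m + m := by ring
    simp only [hφdef, shiftPath, h1]
  have hφm : ∀ k, Measurable (φ k) := fun k => hgm.comp (measurable_pi_apply (k * m))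
  have hbm : ∀ n, Measurable (blk m C φ n) := blk_measurable m C hC φ hφm
  set W : ℕ → (ℕ → 𝒳) → ℝ≥0∞ := fun n ω => blk m C φ n ω *
      (if (n : ℝ≥0∞) < pathTau m C ω then ENNReal.ofReal (Real.exp (V (ω (n * m)))) else 1)
    with hWdef
  have hWm : ∀ n, Measurable (W n) := by
    intro n
    refine (hbm n).mul (Measurable.ite (measurableSet_tauGT m C hC n) ?_ measurable_const)
    exact (Real.measurable_exp.comp (hVm.comp (measurable_pi_apply (n * m)))).ennreal_ofReal
  have hWrec : ∀ (n : ℕ) (ω : ℕ → 𝒳), W (n + 1) ω = ENNReal.ofReal (Real.exp (g (ω 0))) *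
      (if ω m ∈ C then 1 else W n (shiftPath m ω)) := by
    intro n ω
    have hφ0 : φ 0 ω = g (ω 0) := by simp only [hφdef, Nat.zero_mul]
    rw [hWdef]
    simp only
    rw [blk_succ m C φ hφshift, hφ0]
    by_cases hmem : ω m ∈ C
    · have htail : (if ((n + 1 : ℕ) : ℝ≥0∞) < pathTau m C ω
          then ENNReal.ofReal (Real.exp (V (ω ((n + 1) * m)))) else 1) = 1 := by
        refine if_neg fun h => ?_
        have := (pathTau_lt_iff_of_mem m C hmem (n + 1)).1 h
        omega
      rw [htail, if_pos hmem, if_pos hmem]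
      ring
    · have harith : (n + 1) * m = n * m + m := by ring
      have htail : (if ((n + 1 : ℕ) : ℝ≥0∞) < pathTau m C ω
          then ENNReal.ofReal (Real.exp (V (ω ((n + 1) * m)))) else 1)
          = (if ((n : ℕ) : ℝ≥0∞) < pathTau m C (shiftPath m ω)
          then ENNReal.ofReal (Real.exp (V (shiftPath m ω (n * m)))) else 1) := by
        refine if_congr (pathTau_lt_shift m C hmem n) ?_ rfl
        simp [shiftPath, harith]
      rw [htail, if_neg hmem, if_neg hmem]
      ring
  intro n
  induction n with
  | zero =>
    intro x
    have h0 : ∀ ω : ℕ → 𝒳, W 0 ω = ENNReal.ofReal (Real.exp (V (ω 0))) := by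
      intro ω
      rw [hWdef]
      simp only [blk_zero, one_mul, Nat.zero_mul, Nat.cast_zero]
      rw [if_pos (pathTau_pos m C ω)]
    have hsub := subst0 κ Pa hPa_meas hPa x
      (H := fun (y : 𝒳) (_ : ℕ → 𝒳) => ENNReal.ofReal (Real.exp (V y)))
      ((Real.measurable_exp.comp (hVm.comp measurable_fst)).ennreal_ofReal)
    calc ∫⁻ ω, W 0 ω ∂(Pa x) = ∫⁻ ω, ENNReal.ofReal (Real.exp (V (ω 0))) ∂(Pa x) :=
          lintegral_congr fun ω => h0 ω
      _ = ∫⁻ _ω, ENNReal.ofReal (Real.exp (V x)) ∂(Pa x) := hsub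
      _ = ENNReal.ofReal (Real.exp (V x)) := by simp
      _ ≤ ENNReal.ofReal (Real.exp (b * Set.indicator C (fun _ => 1) x + V x)) := by
          refine ENNReal.ofReal_le_ofReal (Real.exp_le_exp.2 ?_)
          have : 0 ≤ b * Set.indicator C (fun _ => 1) x :=
            mul_nonneg hb (Set.indicator_nonneg (fun _ _ => zero_le_one) x)
          linarith
  | succ n ih =>
    intro x
    have hTfm : Measurable fun η : ℕ → 𝒳 => (if η 0 ∈ C then 1 else W n η : ℝ≥0∞) :=
      Measurable.ite ((measurable_pi_apply 0) hC) measurable_const (hWm n)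
    have hsh0 : ∀ ω : ℕ → 𝒳, shiftPath m ω 0 = ω m := fun ω => by simp [shiftPath]
    have hinner : ∀ y : 𝒳,
        (∫⁻ η, (if η 0 ∈ C then 1 else W n η : ℝ≥0∞) ∂(Pa y)) ≤ ENNReal.ofReal (Real.exp (V y)) := by
      intro y
      have hHm : Measurable (Function.uncurry
          fun (z : 𝒳) (η : ℕ → 𝒳) => (if z ∈ C then 1 else W n η : ℝ≥0∞)) :=
        Measurable.ite (measurable_fst hC) measurable_const ((hWm n).comp measurable_snd)
      have hsub := subst0 κ Pa hPa_meas hPa y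
        (H := fun (z : 𝒳) (η : ℕ → 𝒳) => (if z ∈ C then 1 else W n η : ℝ≥0∞)) hHm
      rw [hsub]
      by_cases hy : y ∈ C
      · simp only [hy, if_true]
        have : ∫⁻ _η, (1 : ℝ≥0∞) ∂(Pa y) = 1 := by simp
        rw [this]
        exact ENNReal.one_le_ofReal.2 (Real.one_le_exp_iff.2 (hV0 y))
      · simp only [hy, if_false]
        have := ih y
        rwa [Set.indicator_of_notMem hy, mul_zero, zero_add] at this
    set F : (ℕ → 𝒳) → (ℕ → 𝒳) → ℝ≥0∞ := fun _ω η =>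
      (if η 0 ∈ C then 1 else W n η : ℝ≥0∞) with hFdef
    have hFm : Measurable (Function.uncurry F) := hTfm.comp measurable_snd
    calc ∫⁻ ω, W (n + 1) ω ∂(Pa x)
        = ∫⁻ ω, ENNReal.ofReal (Real.exp (g (ω 0))) *
            (if ω m ∈ C then 1 else W n (shiftPath m ω)) ∂(Pa x) :=
          lintegral_congr fun ω => hWrec n ω
      _ = ∫⁻ ω, ENNReal.ofReal (Real.exp (g x)) *
            (if ω m ∈ C then 1 else W n (shiftPath m ω)) ∂(Pa x) := by
          refine subst0 κ Pa hPa_meas hPa x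
            (H := fun (y : 𝒳) (ω : ℕ → 𝒳) => ENNReal.ofReal (Real.exp (g y)) *
              (if ω m ∈ C then 1 else W n (shiftPath m ω))) ?_
          refine Measurable.mul ?_ ?_
          · exact (Real.measurable_exp.comp (hgm.comp measurable_fst)).ennreal_ofReal
          · exact Measurable.ite (((measurable_pi_apply m).comp measurable_snd) hC)
              measurable_const (((hWm n).comp (measurable_shiftPath m)).comp measurable_snd)
      _ = ENNReal.ofReal (Real.exp (g x)) *
            ∫⁻ ω, (if ω m ∈ C then 1 else W n (shiftPath m ω) : ℝ≥0∞) ∂(Pa x) := by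
          refine lintegral_const_mul _ ?_
          exact Measurable.ite ((measurable_pi_apply m) hC) measurable_const
            ((hWm n).comp (measurable_shiftPath m))
      _ = ENNReal.ofReal (Real.exp (g x)) * ∫⁻ ω, F ω (shiftPath m ω) ∂(Pa x) := by
          congr 1
          refine lintegral_congr fun ω => ?_
          rw [hFdef]
          simp only [hsh0]
      _ = ENNReal.ofReal (Real.exp (g x)) *
            ∫⁻ ω, ∫⁻ η, F (splicePath m ω η) η ∂(Pa (ω m)) ∂(Pa x) := by
          rw [star κ Pa hPa_meas hPa m x F hFm]
      _ ≤ ENNReal.ofReal (Real.exp (g x)) *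
            ∫⁻ ω, ENNReal.ofReal (Real.exp (V (ω m))) ∂(Pa x) := by
          refine mul_le_mul_right (lintegral_mono fun ω => ?_) _
          exact hinner (ω m)
      _ ≤ ENNReal.ofReal (Real.exp (g x)) *
            ENNReal.ofReal (Real.exp (V x - g x + b * Set.indicator C (fun _ => 1) x)) :=
          mul_le_mul_right (hdrift x) _
      _ = ENNReal.ofReal (Real.exp (b * Set.indicator C (fun _ => 1) x + V x)) := by
          rw [← ENNReal.ofReal_mul (le_of_lt (Real.exp_pos _)), ← Real.exp_add]
          congr 2
          ring

end Claims

section Limits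

lemma sumBefore_eq_iSup (τ : ℝ≥0∞) (u : ℕ → ℝ) (hu : ∀ k, 0 ≤ u k) :
    sumBefore τ (fun k => ENNReal.ofReal (u k))
      = ⨆ n, ENNReal.ofReal (∑ k ∈ Finset.range n, if (k : ℝ≥0∞) < τ then u k else 0) := by
  rw [sumBefore, ENNReal.tsum_eq_iSup_nat]
  refine iSup_congr fun n => ?_
  rw [ENNReal.ofReal_sum_of_nonneg]
  · refine Finset.sum_congr rfl fun k _ => ?_
    by_cases h : (k : ℝ≥0∞) < τ
    · simp [h]
    · simp [h]
  · intro k _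
    by_cases h : (k : ℝ≥0∞) < τ <;> simp [h, hu k]

lemma expE_ofReal_iSup (t : ℕ → ℝ) (ht : Monotone t) (h0 : ∀ n, 0 ≤ t n) :
    expE (⨆ n, ENNReal.ofReal (t n)) = ⨆ n, ENNReal.ofReal (Real.exp (t n)) := by
  by_cases hs : (⨆ n, ENNReal.ofReal (t n)) = ⊤
  · rw [expE, if_pos hs]
    have hle : (⊤ : ℝ≥0∞) ≤ ⨆ n, ENNReal.ofReal (Real.exp (t n)) := by
      rw [← hs]
      refine iSup_mono fun n => ENNReal.ofReal_le_ofReal ?_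
      have := Real.add_one_le_exp (t n)
      linarith
    exact (top_unique hle).symm
  · rw [expE, if_neg hs]
    have hbdd : BddAbove (Set.range t) := by
      refine ⟨(⨆ n, ENNReal.ofReal (t n)).toReal, ?_⟩
      rintro r ⟨n, rfl⟩
      have h1 : ENNReal.ofReal (t n) ≤ ⨆ n, ENNReal.ofReal (t n) :=
        le_iSup (fun n => ENNReal.ofReal (t n)) n
      have := ENNReal.toReal_mono hs h1
      rwa [ENNReal.toReal_ofReal (h0 n)] at this
    have hofReal_mono : Monotone ENNReal.ofReal := fun _ _ h => ENNReal.ofReal_le_ofReal h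
    have h1 : (⨆ n, ENNReal.ofReal (t n)) = ENNReal.ofReal (⨆ n, t n) := by
      refine (Monotone.map_ciSup_of_continuousAt ?_ hofReal_mono hbdd).symm
      exact ENNReal.continuous_ofReal.continuousAt
    rw [h1, ENNReal.toReal_ofReal]
    swap
    · exact le_trans (h0 0) (le_ciSup hbdd 0)
    have hexp_mono : Monotone Real.exp := fun _ _ h => Real.exp_le_exp.2 h
    have h2 : Real.exp (⨆ n, t n) = ⨆ n, Real.exp (t n) :=
      Monotone.map_ciSup_of_continuousAt Real.continuous_exp.continuousAt hexp_mono hbdd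
    have hbdd2 : BddAbove (Set.range fun n => Real.exp (t n)) := by
      obtain ⟨B, hB⟩ := hbdd
      refine ⟨Real.exp B, ?_⟩
      rintro r ⟨n, rfl⟩
      exact Real.exp_le_exp.2 (hB ⟨n, rfl⟩)
    have h3 : ENNReal.ofReal (⨆ n, Real.exp (t n)) = ⨆ n, ENNReal.ofReal (Real.exp (t n)) :=
      Monotone.map_ciSup_of_continuousAt ENNReal.continuous_ofReal.continuousAt
        hofReal_mono hbdd2
    rw [h2, h3]

lemma lyapunov {Ω : Type*} [MeasurableSpace Ω] (μ : Measure Ω) [IsProbabilityMeasure μ]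
    {h : Ω → ℝ≥0∞} (hm : Measurable h) {s : ℝ} (hs0 : 0 < s) (hs1 : s ≤ 1) :
    ∫⁻ ω, h ω ^ s ∂μ ≤ (∫⁻ ω, h ω ∂μ) ^ s := by
  rcases eq_or_lt_of_le hs1 with heq | hlt
  · subst heq
    simp
  · have hp : (1 : ℝ) < 1 / s := one_lt_one_div hs0 hlt
    have hpq := Real.HolderConjugate.conjExponent hp
    have hms : Measurable fun ω => h ω ^ s := hm.pow measurable_const
    have h1 := ENNReal.lintegral_mul_le_Lp_mul_Lq μ hpq (f := fun ω => h ω ^ s)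
      (g := fun _ => (1 : ℝ≥0∞)) hms.aemeasurable aemeasurable_const
    simp only [Pi.mul_apply, mul_one, ENNReal.one_rpow, lintegral_const, measure_univ,
      one_mul, ENNReal.one_rpow] at h1
    calc ∫⁻ ω, h ω ^ s ∂μ ≤ (∫⁻ ω, (h ω ^ s) ^ (1 / s) ∂μ) ^ (1 / (1 / s)) * 1 := by
          simpa using h1
      _ = (∫⁻ ω, h ω ∂μ) ^ s := by
          rw [mul_one, one_div_one_div]
          congr 1
          refine lintegral_congr fun ω => ?_
          rw [← ENNReal.rpow_mul]
          rw [mul_one_div, div_self (ne_of_gt hs0), ENNReal.rpow_one]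

/-- convert `ofReal (exp (truncated sum))` into `blk` -/
lemma ofReal_exp_sum_eq_blk {𝒳' : Type*} [MeasurableSpace 𝒳'] (m : ℕ) (C : Set 𝒳')
    (φ : ℕ → (ℕ → 𝒳') → ℝ) (n : ℕ) (ω : ℕ → 𝒳') :
    ENNReal.ofReal (Real.exp (∑ k ∈ Finset.range n,
        if (k : ℝ≥0∞) < pathTau m C ω then φ k ω else 0))
      = blk m C φ n ω := by
  rw [Real.exp_sum, ENNReal.ofReal_prod_of_nonneg (fun k _ => le_of_lt (Real.exp_pos _)), blk]
  refine Finset.prod_congr rfl fun k _ => ?_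
  by_cases h : (k : ℝ≥0∞) < pathTau m C ω
  · simp [h]
  · simp [h]

end Limits
end Stmt15

set_option maxHeartbeats 1600000 in
/-- Theorem (multiplicative drift ⇒ exponential integrability of excursions):
if `g(x) = log E_x exp(2c^{−1}|Z_0(f)|^α)` satisfies the multiplicative drift condition
`P^m(e^V)(x) ≤ exp(V(x) − g(x) + b 1_C(x))` with `V ≤ K` on `C`, then
(i) `E_x exp(Σ_{k<τ_C} g(X_{km})) ≤ exp(b 1_C(x) + V(x))` for all `x`, and
(ii) `sup_{x∈C} ‖Σ_{k<τ_C} |Z_k(f)|^α‖_{ψ_1,P_x} ≤ max{1, (b+K)/log 2}·c`.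
Here `Pa x` is the Ionescu–Tulcea path measure of the canonical chain started at `x`,
characterized by the recursion `hPa`. -/
theorem stmt_15 {𝒳 : Type*} [MeasurableSpace 𝒳]
    (κ : Kernel 𝒳 𝒳) [IsMarkovKernel κ]
    (Pa : 𝒳 → Measure (ℕ → 𝒳)) [∀ x, IsProbabilityMeasure (Pa x)]
    (hPa_meas : Measurable Pa)
    (hPa : ∀ x, Pa x = (κ x).bind fun y => (Pa y).map (prependPath x))
    (m : ℕ) (hm : 1 ≤ m)
    (f : 𝒳 → ℝ) (hf : Measurable f)
    (α c : ℝ) (hα : 0 < α) (hα1 : α ≤ 1) (hc : 0 < c)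
    (g : 𝒳 → ℝ) (hgm : Measurable g)
    (hg : ∀ x, ∫⁻ ω, ENNReal.ofReal (Real.exp (2 / c * |pathZ m f 0 ω| ^ α)) ∂(Pa x)
        = ENNReal.ofReal (Real.exp (g x)))
    (V : 𝒳 → ℝ) (hVm : Measurable V) (hV0 : ∀ x, 0 ≤ V x)
    (C : Set 𝒳) (hC : MeasurableSet C)
    (b K : ℝ) (hb : 0 ≤ b) (hK : 0 < K) (hVK : ∀ x ∈ C, V x ≤ K)
    (hdrift : ∀ x, ∫⁻ ω, ENNReal.ofReal (Real.exp (V (ω m))) ∂(Pa x)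
        ≤ ENNReal.ofReal (Real.exp (V x - g x + b * Set.indicator C (fun _ => 1) x))) :
    (∀ x, ∫⁻ ω, expE (sumBefore (pathTau m C ω)
            fun k => ENNReal.ofReal (g (ω (k * m)))) ∂(Pa x)
        ≤ ENNReal.ofReal (Real.exp (b * Set.indicator C (fun _ => 1) x + V x))) ∧
    (⨆ x ∈ C, psiNormE (Pa x) 1
        (fun ω => sumBefore (pathTau m C ω)
          fun k => ENNReal.ofReal (|pathZ m f k ω| ^ α)))
      ≤ ENNReal.ofReal (max 1 ((b + K) / Real.log 2) * c) := by
  classical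
  have hlog2 : 0 < Real.log 2 := Real.log_pos one_lt_two
  -- g is nonnegative
  have hg0 : ∀ x, 0 ≤ g x := by
    intro x
    have hpt : ∀ ω : ℕ → 𝒳,
        (1 : ℝ≥0∞) ≤ ENNReal.ofReal (Real.exp (2 / c * |pathZ m f 0 ω| ^ α)) := by
      intro ω
      refine ENNReal.one_le_ofReal.2 (Real.one_le_exp_iff.2 ?_)
      have h1 : 0 ≤ |pathZ m f 0 ω| ^ α := Real.rpow_nonneg (abs_nonneg _) α
      have h2 : 0 ≤ 2 / c := by positivity
      exact mul_nonneg h2 h1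
    have h1 : (1 : ℝ≥0∞) ≤ ∫⁻ ω, ENNReal.ofReal
        (Real.exp (2 / c * |pathZ m f 0 ω| ^ α)) ∂(Pa x) := by
      calc (1 : ℝ≥0∞) = ∫⁻ _ω, (1 : ℝ≥0∞) ∂(Pa x) := by simp
        _ ≤ _ := lintegral_mono hpt
    rw [hg x] at h1
    exact Real.one_le_exp_iff.1 (ENNReal.one_le_ofReal.1 h1)
  set φg : ℕ → (ℕ → 𝒳) → ℝ := fun k ω => g (ω (k * m)) with hφg
  have hφgm : ∀ k, Measurable (φg k) := fun k => hgm.comp (measurable_pi_apply (k * m))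
  have hblkgm : ∀ n, Measurable (Stmt15.blk m C φg n) := Stmt15.blk_measurable m C hC φg hφgm
  -- integral bound for the pure g-block
  have hblkG_le : ∀ (n : ℕ) (x : 𝒳), ∫⁻ ω, Stmt15.blk m C φg n ω ∂(Pa x)
      ≤ ENNReal.ofReal (Real.exp (b * Set.indicator C (fun _ => 1) x + V x)) := by
    intro n x
    have h1 := Stmt15.claim1 κ Pa m C g hPa_meas hPa hC hgm V hVm hV0 b hb hdrift n x
    refine le_trans (lintegral_mono fun ω => ?_) h1
    conv_lhs => rw [← mul_one (Stmt15.blk m C φg n ω)]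
    refine mul_le_mul_right ?_ _
    by_cases hcond : ((n : ℕ) : ℝ≥0∞) < pathTau m C ω
    · rw [if_pos hcond]
      exact ENNReal.one_le_ofReal.2 (Real.one_le_exp_iff.2 (hV0 _))
    · rw [if_neg hcond]
  -- partial sums of the g terms
  have hγ_mono : ∀ ω : ℕ → 𝒳, Monotone fun n => ∑ k ∈ Finset.range n,
      if (k : ℝ≥0∞) < pathTau m C ω then g (ω (k * m)) else 0 := by
    intro ω
    refine monotone_nat_of_le_succ fun n => ?_
    rw [Finset.sum_range_succ]
    have : (0:ℝ) ≤ if ((n : ℕ) : ℝ≥0∞) < pathTau m C ω then g (ω (n * m)) else 0 := by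
      by_cases h : ((n : ℕ) : ℝ≥0∞) < pathTau m C ω <;> simp [h, hg0]
    linarith
  have hγ_nonneg : ∀ (ω : ℕ → 𝒳) (n : ℕ), 0 ≤ ∑ k ∈ Finset.range n,
      if (k : ℝ≥0∞) < pathTau m C ω then g (ω (k * m)) else 0 := by
    intro ω n
    refine Finset.sum_nonneg fun k _ => ?_
    by_cases h : (k : ℝ≥0∞) < pathTau m C ω <;> simp [h, hg0]
  have hrepr1 : ∀ ω : ℕ → 𝒳,
      expE (sumBefore (pathTau m C ω) fun k => ENNReal.ofReal (g (ω (k * m))))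
        = ⨆ n, Stmt15.blk m C φg n ω := by
    intro ω
    rw [Stmt15.sumBefore_eq_iSup (pathTau m C ω) (fun k => g (ω (k * m))) (fun k => hg0 _),
      Stmt15.expE_ofReal_iSup _ (hγ_mono ω) (hγ_nonneg ω)]
    exact iSup_congr fun n => Stmt15.ofReal_exp_sum_eq_blk m C φg n ω
  have hblk_mono : Monotone fun n => Stmt15.blk m C φg n := by
    refine monotone_nat_of_le_succ fun n ω => ?_
    show Stmt15.blk m C φg n ω ≤ Stmt15.blk m C φg (n + 1) ω
    rw [Stmt15.blk, Stmt15.blk, Finset.prod_range_succ]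
    conv_lhs => rw [← mul_one (∏ k ∈ Finset.range n, _)]
    refine mul_le_mul_right ?_ _
    by_cases h : ((n : ℕ) : ℝ≥0∞) < pathTau m C ω
    · rw [if_pos h]
      exact ENNReal.one_le_ofReal.2 (Real.one_le_exp_iff.2 (hg0 _))
    · rw [if_neg h]
  have part1 : ∀ x, ∫⁻ ω, expE (sumBefore (pathTau m C ω)
        fun k => ENNReal.ofReal (g (ω (k * m)))) ∂(Pa x)
      ≤ ENNReal.ofReal (Real.exp (b * Set.indicator C (fun _ => 1) x + V x)) := by
    intro x
    calc ∫⁻ ω, expE (sumBefore (pathTau m C ω)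
          fun k => ENNReal.ofReal (g (ω (k * m)))) ∂(Pa x)
        = ∫⁻ ω, ⨆ n, Stmt15.blk m C φg n ω ∂(Pa x) := lintegral_congr hrepr1
      _ = ⨆ n, ∫⁻ ω, Stmt15.blk m C φg n ω ∂(Pa x) := lintegral_iSup hblkgm hblk_mono
      _ ≤ _ := iSup_le fun n => hblkG_le n x
  refine ⟨part1, ?_⟩
  -- Part (ii)
  refine iSup₂_le fun x hx => ?_
  set M := max 1 ((b + K) / Real.log 2) with hM
  have hM1 : (1 : ℝ) ≤ M := le_max_left _ _
  have hM0 : (0 : ℝ) < M := lt_of_lt_of_le one_pos hM1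
  have hr0 : (0 : ℝ) < M * c := mul_pos hM0 hc
  refine sInf_le ⟨M * c, hr0, rfl, ?_⟩
  -- truncated sums
  set σ : ℕ → (ℕ → 𝒳) → ℝ := fun n ω => ∑ k ∈ Finset.range n,
    if (k : ℝ≥0∞) < pathTau m C ω then |pathZ m f k ω| ^ α else 0 with hσ
  set γ : ℕ → (ℕ → 𝒳) → ℝ := fun n ω => ∑ k ∈ Finset.range n,
    if (k : ℝ≥0∞) < pathTau m C ω then g (ω (k * m)) else 0 with hγ
  set A : ℕ → (ℕ → 𝒳) → ℝ := fun n ω => ∑ k ∈ Finset.range n,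
    if (k : ℝ≥0∞) < pathTau m C ω then 2 / c * |pathZ m f k ω| ^ α - g (ω (k * m)) else 0 with hA
  have hZabs : ∀ k, Measurable fun ω : ℕ → 𝒳 => |pathZ m f k ω| ^ α :=
    fun k => (Stmt15.measurable_pathZ m f hf k).abs.pow measurable_const
  have hσm : ∀ n, Measurable (σ n) := fun n => Finset.measurable_sum _ fun k _ =>
    Measurable.ite (Stmt15.measurableSet_tauGT m C hC k) (hZabs k) measurable_const
  have hγm : ∀ n, Measurable (γ n) := fun n => Finset.measurable_sum _ fun k _ =>
    Measurable.ite (Stmt15.measurableSet_tauGT m C hC k)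
      (hgm.comp (measurable_pi_apply (k * m))) measurable_const
  have hAm : ∀ n, Measurable (A n) := fun n => Finset.measurable_sum _ fun k _ =>
    Measurable.ite (Stmt15.measurableSet_tauGT m C hC k)
      (((hZabs k).const_mul (2 / c)).sub (hgm.comp (measurable_pi_apply (k * m))))
      measurable_const
  have hσ_nonneg : ∀ (ω : ℕ → 𝒳) (n : ℕ), 0 ≤ σ n ω := by
    intro ω n
    refine Finset.sum_nonneg fun k _ => ?_
    by_cases h : (k : ℝ≥0∞) < pathTau m C ω <;>
      simp [h, Real.rpow_nonneg (abs_nonneg (pathZ m f k ω)) α]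
  have hσ_mono : ∀ ω : ℕ → 𝒳, Monotone fun n => σ n ω := by
    intro ω
    refine monotone_nat_of_le_succ fun n => ?_
    rw [hσ]
    simp only
    rw [Finset.sum_range_succ]
    have h0 : (0:ℝ) ≤ if ((n : ℕ) : ℝ≥0∞) < pathTau m C ω then |pathZ m f n ω| ^ α else 0 := by
      by_cases h : ((n : ℕ) : ℝ≥0∞) < pathTau m C ω <;>
        simp [h, Real.rpow_nonneg (abs_nonneg (pathZ m f n ω)) α]
    linarith
  -- rewrite the integrand as a supremum
  have hYrepr : ∀ ω : ℕ → 𝒳,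
      expE ((sumBefore (pathTau m C ω) fun k => ENNReal.ofReal (|pathZ m f k ω| ^ α)) ^ (1:ℝ)
          / ENNReal.ofReal ((M * c) ^ (1:ℝ)))
        = ⨆ n, ENNReal.ofReal (Real.exp (σ n ω / (M * c))) := by
    intro ω
    rw [ENNReal.rpow_one, Real.rpow_one,
      Stmt15.sumBefore_eq_iSup (pathTau m C ω) (fun k => |pathZ m f k ω| ^ α)
        (fun k => Real.rpow_nonneg (abs_nonneg _) α),
      ENNReal.iSup_div]
    have h1 : (⨆ n, ENNReal.ofReal (σ n ω) / ENNReal.ofReal (M * c))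
        = ⨆ n, ENNReal.ofReal (σ n ω / (M * c)) :=
      iSup_congr fun n => (ENNReal.ofReal_div_of_pos hr0).symm
    rw [h1]
    refine Stmt15.expE_ofReal_iSup _ ?_ ?_
    · intro n1 n2 h
      dsimp only
      rw [div_eq_mul_inv, div_eq_mul_inv]
      exact mul_le_mul_of_nonneg_right (hσ_mono ω h) (inv_nonneg.2 hr0.le)
    · exact fun n => div_nonneg (hσ_nonneg ω n) hr0.le
  -- per-n bound
  have hbound : ∀ n : ℕ, ∫⁻ ω, ENNReal.ofReal (Real.exp (σ n ω / (M * c))) ∂(Pa x) ≤ 2 := by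
    intro n
    set p : ℝ := 2 * M with hp
    have hp1 : (1 : ℝ) < p := by rw [hp]; nlinarith
    have hpq := Real.HolderConjugate.conjExponent hp1
    set q : ℝ := p.conjExponent with hq
    have hq_eq : q = p / (p - 1) := rfl
    have hp0 : (0 : ℝ) < p := by linarith
    have hq1 : (1 : ℝ) < q := hpq.symm.lt
    have hq0 : (0 : ℝ) < q := by linarith
    set θ : ℝ := 1 / (2 * M) with hθ
    set s : ℝ := 1 / (2 * M - 1) with hs
    have h2M1 : (1 : ℝ) ≤ 2 * M - 1 := by linarith
    have h2M1' : (0 : ℝ) < 2 * M - 1 := by linarith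
    have hs0 : 0 < s := by rw [hs]; positivity
    have hs1 : s ≤ 1 := by rw [hs, div_le_one h2M1']; linarith
    have hθ0 : 0 < θ := by rw [hθ]; positivity
    have hθp : θ * p = 1 := by
      rw [hθ, hp]
      field_simp
    have hθq : θ * q = s := by
      rw [hθ, hq_eq, hp, hs]
      rw [div_mul_div_comm, one_mul]
      rw [div_eq_div_iff (by positivity) (ne_of_gt h2M1')]
      ring
    have hsq : s * (1 / q) = θ := by
      rw [hs, hθ, hq_eq, hp]
      rw [one_div_div]
      rw [div_mul_div_comm, one_mul]
      rw [div_eq_div_iff (by positivity) (ne_of_gt (by positivity))]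
      ring
    have hsplit : ∀ ω : ℕ → 𝒳, σ n ω / (M * c) = θ * A n ω + θ * γ n ω := by
      intro ω
      have hAγ : A n ω + γ n ω = 2 / c * σ n ω := by
        rw [hA, hγ, hσ]
        simp only
        rw [← Finset.sum_add_distrib, Finset.mul_sum]
        refine Finset.sum_congr rfl fun k _ => ?_
        by_cases h : (k : ℝ≥0∞) < pathTau m C ω
        · simp only [h, if_true]; ring
        · simp [h]
      rw [← mul_add, hAγ, hθ]
      field_simp
    set u : (ℕ → 𝒳) → ℝ≥0∞ := fun ω => ENNReal.ofReal (Real.exp (θ * A n ω)) with hu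
    set v : (ℕ → 𝒳) → ℝ≥0∞ := fun ω => ENNReal.ofReal (Real.exp (θ * γ n ω)) with hv
    have hum : Measurable u :=
      (Real.measurable_exp.comp ((hAm n).const_mul θ)).ennreal_ofReal
    have hvm : Measurable v :=
      (Real.measurable_exp.comp ((hγm n).const_mul θ)).ennreal_ofReal
    have hH := ENNReal.lintegral_mul_le_Lp_mul_Lq (Pa x) hpq hum.aemeasurable hvm.aemeasurable
    have hup : ∀ ω : ℕ → 𝒳, u ω ^ p = ENNReal.ofReal (Real.exp (A n ω)) := by
      intro ω
      rw [hu]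
      simp only
      rw [ENNReal.ofReal_rpow_of_pos (Real.exp_pos _), ← Real.exp_mul]
      have harg : θ * A n ω * p = A n ω := by
        calc θ * A n ω * p = (θ * p) * A n ω := by ring
          _ = A n ω := by rw [hθp]; ring
      rw [harg]
    have hvq : ∀ ω : ℕ → 𝒳, v ω ^ q = (ENNReal.ofReal (Real.exp (γ n ω))) ^ s := by
      intro ω
      rw [hv]
      simp only
      rw [ENNReal.ofReal_rpow_of_pos (Real.exp_pos _),
        ENNReal.ofReal_rpow_of_pos (Real.exp_pos _), ← Real.exp_mul, ← Real.exp_mul]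
      have harg : θ * γ n ω * q = γ n ω * s := by
        calc θ * γ n ω * q = (θ * q) * γ n ω := by ring
          _ = γ n ω * s := by rw [hθq]; ring
      rw [harg]
    have hintA : ∫⁻ ω, u ω ^ p ∂(Pa x) ≤ 1 := by
      calc ∫⁻ ω, u ω ^ p ∂(Pa x) = ∫⁻ ω, ENNReal.ofReal (Real.exp (A n ω)) ∂(Pa x) :=
            lintegral_congr hup
        _ = ∫⁻ ω, Stmt15.blk m C
              (fun k ω => 2 / c * |pathZ m f k ω| ^ α - g (ω (k * m))) n ω ∂(Pa x) := by
            refine lintegral_congr fun ω => ?_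
            simp only [hA]
            exact Stmt15.ofReal_exp_sum_eq_blk m C
              (fun k ω => 2 / c * |pathZ m f k ω| ^ α - g (ω (k * m))) n ω
        _ ≤ 1 := Stmt15.claim2 κ Pa m C f g c α hPa_meas hPa hC hf hgm hg n x
    have hfac1 : (∫⁻ ω, u ω ^ p ∂(Pa x)) ^ (1 / p) ≤ 1 :=
      ENNReal.rpow_le_one hintA (by positivity)
    have hγexpm : Measurable fun ω : ℕ → 𝒳 => ENNReal.ofReal (Real.exp (γ n ω)) :=
      (Real.measurable_exp.comp (hγm n)).ennreal_ofReal
    have hintγ : ∫⁻ ω, ENNReal.ofReal (Real.exp (γ n ω)) ∂(Pa x)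
        ≤ ENNReal.ofReal (Real.exp (b + K)) := by
      calc ∫⁻ ω, ENNReal.ofReal (Real.exp (γ n ω)) ∂(Pa x)
          = ∫⁻ ω, Stmt15.blk m C φg n ω ∂(Pa x) := by
            refine lintegral_congr fun ω => ?_
            simp only [hγ]
            exact Stmt15.ofReal_exp_sum_eq_blk m C φg n ω
        _ ≤ ENNReal.ofReal (Real.exp (b * Set.indicator C (fun _ => 1) x + V x)) :=
            hblkG_le n x
        _ ≤ ENNReal.ofReal (Real.exp (b + K)) := by
            refine ENNReal.ofReal_le_ofReal (Real.exp_le_exp.2 ?_)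
            rw [Set.indicator_of_mem hx]
            have := hVK x hx
            nlinarith
    have hintvq : ∫⁻ ω, v ω ^ q ∂(Pa x) ≤ (ENNReal.ofReal (Real.exp (b + K))) ^ s := by
      calc ∫⁻ ω, v ω ^ q ∂(Pa x)
          = ∫⁻ ω, (ENNReal.ofReal (Real.exp (γ n ω))) ^ s ∂(Pa x) := lintegral_congr hvq
        _ ≤ (∫⁻ ω, ENNReal.ofReal (Real.exp (γ n ω)) ∂(Pa x)) ^ s :=
            Stmt15.lyapunov (Pa x) hγexpm hs0 hs1
        _ ≤ (ENNReal.ofReal (Real.exp (b + K))) ^ s :=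
            ENNReal.rpow_le_rpow hintγ hs0.le
    have hfac2 : (∫⁻ ω, v ω ^ q ∂(Pa x)) ^ (1 / q)
        ≤ (ENNReal.ofReal (Real.exp (b + K))) ^ θ := by
      have h1 : ((ENNReal.ofReal (Real.exp (b + K))) ^ s) ^ (1 / q)
          = (ENNReal.ofReal (Real.exp (b + K))) ^ θ := by
        rw [← ENNReal.rpow_mul, hsq]
      rw [← h1]
      exact ENNReal.rpow_le_rpow hintvq (by positivity)
    calc ∫⁻ ω, ENNReal.ofReal (Real.exp (σ n ω / (M * c))) ∂(Pa x)
        = ∫⁻ ω, (u * v) ω ∂(Pa x) := by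
          refine lintegral_congr fun ω => ?_
          rw [Pi.mul_apply, hu, hv]
          simp only
          rw [hsplit ω, Real.exp_add, ENNReal.ofReal_mul (Real.exp_pos _).le]
      _ ≤ (∫⁻ ω, u ω ^ p ∂(Pa x)) ^ (1 / p) * (∫⁻ ω, v ω ^ q ∂(Pa x)) ^ (1 / q) := hH
      _ ≤ 1 * (ENNReal.ofReal (Real.exp (b + K))) ^ θ := mul_le_mul' hfac1 hfac2
      _ = ENNReal.ofReal (Real.exp ((b + K) * θ)) := by
          rw [one_mul, ENNReal.ofReal_rpow_of_pos (Real.exp_pos _), ← Real.exp_mul]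
      _ ≤ 2 := by
          have h1 : (b + K) * θ ≤ Real.log 2 := by
            have h2 : (b + K) / Real.log 2 ≤ M := le_max_right _ _
            have h3 : b + K ≤ M * Real.log 2 := by
              rw [div_le_iff₀ hlog2] at h2
              linarith
            have h4 : (b + K) * θ ≤ (M * Real.log 2) * θ :=
              mul_le_mul_of_nonneg_right h3 hθ0.le
            have h5 : (M * Real.log 2) * θ = Real.log 2 / 2 := by
              rw [hθ]
              field_simp
            linarith
          calc ENNReal.ofReal (Real.exp ((b + K) * θ))
              ≤ ENNReal.ofReal (Real.exp (Real.log 2)) :=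
                ENNReal.ofReal_le_ofReal (Real.exp_le_exp.2 h1)
            _ = ENNReal.ofReal 2 := by rw [Real.exp_log two_pos]
            _ = 2 := by simp
  -- assemble part (ii)
  calc ∫⁻ ω, expE ((sumBefore (pathTau m C ω)
          fun k => ENNReal.ofReal (|pathZ m f k ω| ^ α)) ^ (1:ℝ)
        / ENNReal.ofReal ((M * c) ^ (1:ℝ))) ∂(Pa x)
      = ∫⁻ ω, ⨆ n, ENNReal.ofReal (Real.exp (σ n ω / (M * c))) ∂(Pa x) :=
        lintegral_congr hYrepr
    _ = ⨆ n, ∫⁻ ω, ENNReal.ofReal (Real.exp (σ n ω / (M * c))) ∂(Pa x) := by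
        refine lintegral_iSup (fun n => ?_) ?_
        · exact (Real.measurable_exp.comp ((hσm n).div_const (M * c))).ennreal_ofReal
        · refine monotone_nat_of_le_succ fun n ω => ?_
          refine ENNReal.ofReal_le_ofReal (Real.exp_le_exp.2 ?_)
          rw [div_eq_mul_inv, div_eq_mul_inv]
          exact mul_le_mul_of_nonneg_right (hσ_mono ω (Nat.le_succ n)) (inv_nonneg.2 hr0.le)
    _ ≤ 2 := iSup_le hbound
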